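/- If an extended open graph (G, I, O, λ) has a gflow and Z ∈ λ(u) for every u ∈ Iᶜ ∩ Oᶜ, then (G, I, O, λ) has a Z-NF gflow, i.e., a gflow g with g(u) ⊆ {u} ∪ O for all u ∈ Oᶜ. -/

import Mathlib

open scoped symmDiff

inductive Pauli | X | Y | Z
deriving DecidableEq

inductive MPlane | XY | XZ | YZ
deriving DecidableEq

/-- The set of Pauli operators defining a measurement plane. -/
def MPlane.paulis : MPlane → Finset Pauli
  | .XY => {.X, .Y}
  | .XZ => {.X, .Z}
  | .YZ => {.Y, .Z}

variable {V : Type} [Fintype V] [DecidableEq V]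

/-- Odd neighbourhood: vertices with an odd number of neighbours in `A`. -/
def oddNbhd (G : SimpleGraph V) [DecidableRel G.Adj] (A : Finset V) : Finset V :=
  Finset.univ.filter fun w => Odd (A.filter (G.Adj w)).card

/-- `f` is extensive w.r.t. the strict order `r`. -/
def IsExtensive (O : Finset V) (r : V → V → Prop) (f : V → Finset V) : Prop :=
  ∀ u ∉ O, ∀ v ∈ f u, v ≠ u → r u v

/-- gflow of an extended open graph `(G, I, O, lam)`. -/
def IsGflow (G : SimpleGraph V) [DecidableRel G.Adj]
    (I O : Finset V) (lam : V → MPlane) (g : V → Finset V) : Prop :=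
  (∀ u ∉ O, g u ⊆ Iᶜ) ∧
  (∃ r : V → V → Prop, IsStrictOrder V r ∧
    IsExtensive O r (fun u => g u ∪ oddNbhd G (g u))) ∧
  ∀ u ∉ O,
    (lam u = .XY → u ∈ oddNbhd G (g u) ∧ u ∉ g u) ∧
    (lam u = .XZ → u ∈ g u ∧ u ∈ oddNbhd G (g u)) ∧
    (lam u = .YZ → u ∈ g u ∧ u ∉ oddNbhd G (g u))

/-- σ-normal forms for gflows. -/
def IsNF (σ : Pauli) (G : SimpleGraph V) [DecidableRel G.Adj]
    (O : Finset V) (g : V → Finset V) : Prop :=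
  match σ with
  | .X => ∀ u ∉ O, oddNbhd G (g u) ⊆ insert u O
  | .Y => ∀ u ∉ O, (g u ∆ oddNbhd G (g u)) ⊆ insert u O
  | .Z => ∀ u ∉ O, g u ⊆ insert u O

set_option linter.unusedSectionVars false

section ZNFAuxSec

variable {V : Type} [Fintype V] [DecidableEq V]

/-- Indicator function with values in `ZMod 2`. -/
def zind (A : Finset V) (x : V) : ZMod 2 := if x ∈ A then 1 else 0

lemma zind_eq_one {A : Finset V} {x : V} : zind A x = 1 ↔ x ∈ A := by
  unfold zind; split_ifs with h <;> simp [h]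

lemma zind_eq_zero {A : Finset V} {x : V} : zind A x = 0 ↔ x ∉ A := by
  unfold zind; split_ifs with h <;> simp [h]

lemma natCast_parity (n : ℕ) : (n : ZMod 2) = if Odd n then 1 else 0 := by
  have h1 := Nat.mod_add_div n 2
  conv_lhs => rw [← h1]
  push_cast
  have h2 : (2 : ZMod 2) = 0 := by decide
  rw [h2, zero_mul, add_zero]
  simp only [Nat.odd_iff]
  rcases Nat.mod_two_eq_zero_or_one n with h | h <;> simp [h]

lemma zind_symmDiff (A B : Finset V) (x : V) :
    zind (A ∆ B) x = zind A x + zind B x := by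
  unfold zind
  by_cases hA : x ∈ A <;> by_cases hB : x ∈ B <;>
    simp [Finset.mem_symmDiff, hA, hB] <;> decide

/-- The symmetric difference of the family `t` over the index set `S`. -/
def bigSymm (S : Finset V) (t : V → Finset V) : Finset V :=
  Finset.univ.filter fun x => Odd ((S.filter fun v => x ∈ t v).card)

lemma zind_bigSymm (S : Finset V) (t : V → Finset V) (x : V) :
    zind (bigSymm S t) x = ∑ v ∈ S, zind (t v) x := by
  have h : zind (bigSymm S t) x = (((S.filter fun v => x ∈ t v).card : ZMod 2)) := by
    rw [natCast_parity]
    unfold zind bigSymm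
    simp
  rw [h, Finset.natCast_card_filter]
  exact Finset.sum_congr rfl fun v _ => by unfold zind; rfl

lemma exists_of_mem_bigSymm {S : Finset V} {t : V → Finset V} {x : V}
    (hx : x ∈ bigSymm S t) : ∃ v ∈ S, x ∈ t v := by
  unfold bigSymm at hx
  rw [Finset.mem_filter] at hx
  obtain ⟨v, hv⟩ := Finset.card_pos.mp hx.2.pos
  rw [Finset.mem_filter] at hv
  exact ⟨v, hv.1, hv.2⟩

lemma bigSymm_congr {S : Finset V} {t t' : V → Finset V} (h : ∀ v ∈ S, t v = t' v) :
    bigSymm S t = bigSymm S t' := by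
  unfold bigSymm
  have hS : ∀ x : V, (S.filter fun v => x ∈ t v) = (S.filter fun v => x ∈ t' v) := by
    intro x
    apply Finset.filter_congr
    intro v hv
    rw [h v hv]
  ext x
  simp [hS x]

end ZNFAuxSec
section ZNFAuxSec2

variable {V : Type} [Fintype V] [DecidableEq V] (G : SimpleGraph V) [DecidableRel G.Adj]

lemma mem_oddNbhd_iff {A : Finset V} {w : V} :
    w ∈ oddNbhd G A ↔ Odd (A.filter (G.Adj w)).card := by
  simp [oddNbhd]

lemma zind_oddNbhd (A : Finset V) (w : V) :
    zind (oddNbhd G A) w = ∑ x : V, (if G.Adj w x then 1 else 0) * zind A x := by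
  have h : zind (oddNbhd G A) w = ((A.filter (G.Adj w)).card : ZMod 2) := by
    rw [natCast_parity]
    unfold zind
    simp [mem_oddNbhd_iff]
  rw [h, Finset.natCast_card_filter]
  calc ∑ x ∈ A, (if G.Adj w x then (1 : ZMod 2) else 0)
      = ∑ x ∈ A, (if G.Adj w x then 1 else 0) * zind A x :=
        Finset.sum_congr rfl fun x hx => by simp [zind, hx]
    _ = ∑ x : V, (if G.Adj w x then 1 else 0) * zind A x :=
        Finset.sum_subset (Finset.subset_univ A) (fun x _ hx => by simp [zind, hx])

lemma zind_oddNbhd_symmDiff (A B : Finset V) (w : V) :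
    zind (oddNbhd G (A ∆ B)) w = zind (oddNbhd G A) w + zind (oddNbhd G B) w := by
  simp only [zind_oddNbhd, zind_symmDiff, mul_add, Finset.sum_add_distrib]

lemma zind_oddNbhd_bigSymm (S : Finset V) (t : V → Finset V) (w : V) :
    zind (oddNbhd G (bigSymm S t)) w = ∑ v ∈ S, zind (oddNbhd G (t v)) w := by
  rw [zind_oddNbhd]
  simp only [zind_bigSymm, Finset.mul_sum]
  rw [Finset.sum_comm]
  exact Finset.sum_congr rfl fun v _ => (zind_oddNbhd G (t v) w).symm

open Classical in
/-- The Z-normal form construction, by well-founded recursion along `r`. -/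
noncomputable def ZNF (O : Finset V) (g : V → Finset V) (r : V → V → Prop)
    (hwf : WellFounded fun a b => r b a) : V → Finset V :=
  hwf.fix fun u IH =>
    if u ∈ O then g u
    else g u ∆ bigSymm (g u \ insert u O) fun v => if h : r u v then IH v h else ∅

open Classical in
lemma ZNF_eq (O : Finset V) (g : V → Finset V) (r : V → V → Prop)
    (hwf : WellFounded fun a b => r b a) (u : V) :
    ZNF O g r hwf u =
      if u ∈ O then g u
      else g u ∆ bigSymm (g u \ insert u O) fun v =>
        if h : r u v then ZNF O g r hwf v else ∅ := by
  unfold ZNF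
  rw [WellFounded.fix_eq]

lemma ZNF_eq_of_not_mem (O : Finset V) (g : V → Finset V) (r : V → V → Prop)
    (hwf : WellFounded fun a b => r b a) {u : V} (hu : u ∉ O)
    (hr : ∀ v ∈ g u \ insert u O, r u v) :
    ZNF O g r hwf u = g u ∆ bigSymm (g u \ insert u O) (ZNF O g r hwf) := by
  classical
  rw [ZNF_eq, if_neg hu]
  congr 1
  apply bigSymm_congr
  intro v hv
  rw [dif_pos (hr v hv)]

end ZNFAuxSec2
lemma ZNF_main {V : Type} [Fintype V] [DecidableEq V]
    (G : SimpleGraph V) [DecidableRel G.Adj]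
    (I O : Finset V) (g : V → Finset V) (r : V → V → Prop)
    (hwf : WellFounded fun a b => r b a)
    (hIrr : ∀ a, ¬ r a a) (hTrans : ∀ a b c, r a b → r b c → r a c)
    (hg1 : ∀ u ∉ O, g u ⊆ Iᶜ)
    (hext : IsExtensive O r fun u => g u ∪ oddNbhd G (g u))
    (hmem : ∀ u, u ∈ Iᶜ → u ∉ O → u ∈ g u) :
    ∀ u, u ∉ O →
      (ZNF O g r hwf u ⊆ Iᶜ) ∧
      (ZNF O g r hwf u ⊆ insert u O) ∧
      (∀ w, (w ∈ ZNF O g r hwf u ∨ w ∈ oddNbhd G (ZNF O g r hwf u)) → w ≠ u → r u w) ∧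
      (u ∈ ZNF O g r hwf u ↔ u ∈ g u) ∧
      (u ∈ oddNbhd G (ZNF O g r hwf u) ↔ u ∈ oddNbhd G (g u)) := by
  intro u
  refine hwf.induction (C := fun u => u ∉ O →
      (ZNF O g r hwf u ⊆ Iᶜ) ∧
      (ZNF O g r hwf u ⊆ insert u O) ∧
      (∀ w, (w ∈ ZNF O g r hwf u ∨ w ∈ oddNbhd G (ZNF O g r hwf u)) → w ≠ u → r u w) ∧
      (u ∈ ZNF O g r hwf u ↔ u ∈ g u) ∧
      (u ∈ oddNbhd G (ZNF O g r hwf u) ↔ u ∈ oddNbhd G (g u))) u ?_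
  clear u
  intro u IH hu
  set F := ZNF O g r hwf with hFdef
  set B := g u \ insert u O with hBdef
  have hasym : ∀ a b, r a b → ¬ r b a := fun a b h1 h2 => hIrr a (hTrans a b a h1 h2)
  have hBr : ∀ v ∈ B, r u v := by
    intro v hv
    rw [hBdef, Finset.mem_sdiff, Finset.mem_insert] at hv
    push_neg at hv
    exact hext u hu v (Finset.mem_union_left _ hv.1) hv.2.1
  have hBO : ∀ v ∈ B, v ∉ O := by
    intro v hv
    rw [hBdef, Finset.mem_sdiff, Finset.mem_insert] at hv
    push_neg at hv
    exact hv.2.2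
  have hBg : ∀ v ∈ B, v ∈ g u := fun v hv => (Finset.mem_sdiff.mp hv).1
  have hBF : ∀ v ∈ B, v ∈ F v := by
    intro v hv
    have hvI : v ∈ Iᶜ := hg1 u hu (hBg v hv)
    exact (IH v (hBr v hv) (hBO v hv)).2.2.2.1.mpr (hmem v hvI (hBO v hv))
  have hFu : F u = g u ∆ bigSymm B F := ZNF_eq_of_not_mem O g r hwf hu hBr
  have hindF : ∀ w, zind (F u) w = zind (g u) w + ∑ v ∈ B, zind (F v) w := by
    intro w
    rw [hFu, zind_symmDiff, zind_bigSymm]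
  have hindO : ∀ w, zind (oddNbhd G (F u)) w =
      zind (oddNbhd G (g u)) w + ∑ v ∈ B, zind (oddNbhd G (F v)) w := by
    intro w
    rw [hFu, zind_oddNbhd_symmDiff, zind_oddNbhd_bigSymm]
  have hsplitF : ∀ w, w ∈ F u → w ∈ g u ∨ ∃ v ∈ B, w ∈ F v := by
    intro w hw
    by_contra hcon
    push_neg at hcon
    have h1 : zind (F u) w = 1 := zind_eq_one.mpr hw
    rw [hindF w, zind_eq_zero.mpr hcon.1,
      Finset.sum_eq_zero fun v hv => zind_eq_zero.mpr (hcon.2 v hv)] at h1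
    exact absurd h1 (by decide)
  have hsplitO : ∀ w, w ∈ oddNbhd G (F u) →
      w ∈ oddNbhd G (g u) ∨ ∃ v ∈ B, w ∈ oddNbhd G (F v) := by
    intro w hw
    by_contra hcon
    push_neg at hcon
    have h1 : zind (oddNbhd G (F u)) w = 1 := zind_eq_one.mpr hw
    rw [hindO w, zind_eq_zero.mpr hcon.1,
      Finset.sum_eq_zero fun v hv => zind_eq_zero.mpr (hcon.2 v hv)] at h1
    exact absurd h1 (by decide)
  have hb : ∀ w, (w ∈ F u ∨ w ∈ oddNbhd G (F u)) → w ≠ u → r u w := by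
    intro w hw hwu
    have hcases : w ∈ g u ∨ w ∈ oddNbhd G (g u) ∨
        ∃ v ∈ B, (w ∈ F v ∨ w ∈ oddNbhd G (F v)) := by
      rcases hw with hw | hw
      · rcases hsplitF w hw with h | ⟨v, hv, h⟩
        exacts [Or.inl h, Or.inr (Or.inr ⟨v, hv, Or.inl h⟩)]
      · rcases hsplitO w hw with h | ⟨v, hv, h⟩
        exacts [Or.inr (Or.inl h), Or.inr (Or.inr ⟨v, hv, Or.inr h⟩)]
    rcases hcases with h | h | ⟨v, hv, h⟩
    · exact hext u hu w (Finset.mem_union_left _ h) hwu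
    · exact hext u hu w (Finset.mem_union_right _ h) hwu
    · by_cases hwv : w = v
      · subst hwv; exact hBr w hv
      · exact hTrans u v w (hBr v hv) ((IH v (hBr v hv) (hBO v hv)).2.2.1 w h hwv)
  have hnotmem : ∀ v ∈ B, u ∉ F v ∧ u ∉ oddNbhd G (F v) := by
    intro v hv
    have hruv := hBr v hv
    have hne : u ≠ v := fun h => hIrr u (h ▸ hruv)
    have hIHb := (IH v hruv (hBO v hv)).2.2.1
    exact ⟨fun hm => hasym u v hruv (hIHb u (Or.inl hm) hne),
           fun hm => hasym u v hruv (hIHb u (Or.inr hm) hne)⟩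
  have hcF : u ∈ F u ↔ u ∈ g u := by
    have h1 := hindF u
    rw [Finset.sum_eq_zero (fun v hv => zind_eq_zero.mpr (hnotmem v hv).1), add_zero] at h1
    rw [← zind_eq_one, h1, zind_eq_one]
  have hcO : u ∈ oddNbhd G (F u) ↔ u ∈ oddNbhd G (g u) := by
    have h1 := hindO u
    rw [Finset.sum_eq_zero (fun v hv => zind_eq_zero.mpr (hnotmem v hv).2), add_zero] at h1
    rw [← zind_eq_one, h1, zind_eq_one]
  have ha : F u ⊆ insert u O := by
    intro w hw
    by_contra hwO
    have hwgu : w ∈ g u := by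
      rcases hsplitF w hw with h | ⟨v, hv, h⟩
      · exact h
      · have hsub := (IH v (hBr v hv) (hBO v hv)).2.1 h
        rw [Finset.mem_insert] at hsub
        rcases hsub with h' | h'
        · exact h' ▸ hBg v hv
        · exact absurd (Finset.mem_insert_of_mem h') hwO
    have hwB : w ∈ B := Finset.mem_sdiff.mpr ⟨hwgu, hwO⟩
    have hsum : ∑ v ∈ B, zind (F v) w = 1 := by
      rw [Finset.sum_eq_single_of_mem w hwB]
      · exact zind_eq_one.mpr (hBF w hwB)
      · intro v hv hvw
        apply zind_eq_zero.mpr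
        intro hm
        have hsub := (IH v (hBr v hv) (hBO v hv)).2.1 hm
        rw [Finset.mem_insert] at hsub
        rcases hsub with h' | h'
        · exact hvw h'.symm
        · exact hwO (Finset.mem_insert_of_mem h')
    have h1 := hindF w
    rw [hsum, zind_eq_one.mpr hwgu, zind_eq_one.mpr hw] at h1
    exact absurd h1 (by decide)
  have hd : F u ⊆ Iᶜ := by
    intro w hw
    rcases hsplitF w hw with h | ⟨v, hv, h⟩
    · exact hg1 u hu h
    · exact (IH v (hBr v hv) (hBO v hv)).1 h
  exact ⟨hd, ha, hb, hcF, hcO⟩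
/-- Theorem 1 for σ = Z: if every non-input non-output measurement plane contains Z,
then a gflow can be put into Z-normal form. -/
theorem exists_ZNF_gflow (G : SimpleGraph V) [DecidableRel G.Adj]
    (I O : Finset V) (lam : V → MPlane)
    (h : ∃ g : V → Finset V, IsGflow G I O lam g)
    (hplane : ∀ u, u ∉ I → u ∉ O → Pauli.Z ∈ (lam u).paulis) :
    ∃ g : V → Finset V, IsGflow G I O lam g ∧ IsNF .Z G O g := by
  classical
  obtain ⟨g, hg1, ⟨r, hr, hext⟩, hg3⟩ := h
  have hIrr : ∀ a, ¬ r a a := fun a => hr.toIrrefl.irrefl a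
  have hTrans : ∀ a b c, r a b → r b c → r a c := fun a b c => hr.toIsTrans.trans a b c
  haveI : IsIrrefl V (fun a b => r b a) := ⟨fun a ha => hIrr a ha⟩
  haveI : IsTrans V (fun a b => r b a) :=
    ⟨fun a b c h1 h2 => hTrans c b a h2 h1⟩
  have hwf : WellFounded (fun a b => r b a) :=
    Finite.wellFounded_of_trans_of_irrefl _
  have hmem : ∀ u, u ∈ Iᶜ → u ∉ O → u ∈ g u := by
    intro u hI hO
    have hz := hplane u (Finset.mem_compl.mp hI) hO
    have h3 := hg3 u hO
    cases hlam : lam u with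
    | XY => rw [hlam] at hz; exact absurd hz (by decide)
    | XZ => exact (h3.2.1 hlam).1
    | YZ => exact (h3.2.2 hlam).1
  have key := ZNF_main G I O g r hwf hIrr hTrans hg1 hext hmem
  refine ⟨ZNF O g r hwf, ⟨fun u hu => (key u hu).1, ⟨r, hr, ?_⟩, ?_⟩, ?_⟩
  · intro u hu v hv hne
    exact (key u hu).2.2.1 v (Finset.mem_union.mp hv) hne
  · intro u hu
    have h3 := hg3 u hu
    have hc1 := (key u hu).2.2.2.1
    have hc2 := (key u hu).2.2.2.2
    refine ⟨fun hl => ?_, fun hl => ?_, fun hl => ?_⟩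
    · exact ⟨hc2.mpr (h3.1 hl).1, fun hm => (h3.1 hl).2 (hc1.mp hm)⟩
    · exact ⟨hc1.mpr (h3.2.1 hl).1, hc2.mpr (h3.2.1 hl).2⟩
    · exact ⟨hc1.mpr (h3.2.2 hl).1, fun hm => (h3.2.2 hl).2 (hc2.mp hm)⟩
  · intro u hu
    exact (key u hu).2.1
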